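/- Let X be a proper geodesic metric space with base point o, let G be a group acting on X by isometries, and let D > 0 be such that every point of X lies within distance D of the orbit G·o, and such that π(R) := #{g ∈ G : d(o, g·o) ≤ R} is finite for every R ≥ 0. Then π(R + S) ≤ π(R + D) · π(S + D) for all R, S ≥ 0. -/
import Mathlib


open Filter Metric Topology

lemma ncard_prod_aux {α β : Type*} (s : Set α) (t : Set β) :
    (s ×ˢ t).ncard = s.ncard * t.ncard := by
  calc (s ×ˢ t).ncard = Nat.card (s ×ˢ t) := rfl
    _ = Nat.card (s × t) := Nat.card_congr (Equiv.Set.prod s t)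
    _ = s.ncard * t.ncard := Nat.card_prod _ _

/-- Submultiplicativity of the orbit counting function: if every point of `X` is within
distance `D` of the orbit `G·o` and the orbit counting function
`π(R) = #{g : d(o, g·o) ≤ R}` is finite, then `π(R+S) ≤ π(R+D)·π(S+D)`. -/
theorem orbit_counting_submultiplicative {X : Type*} [MetricSpace X] [ProperSpace X]
    (o : X)
    (hgeo : ∀ p q : X, ∃ γ : ℝ → X, γ 0 = p ∧ γ (dist p q) = q ∧
      ∀ s ∈ Set.Icc 0 (dist p q), ∀ t ∈ Set.Icc 0 (dist p q),
        dist (γ s) (γ t) = |s - t|)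
    {G : Type*} [Group G] [MulAction G X]
    (hiso : ∀ g : G, Isometry (fun x : X => g • x))
    (D : ℝ) (hD : 0 < D)
    (hnet : ∀ x : X, ∃ g : G, dist x (g • o) ≤ D)
    (hfin : ∀ R : ℝ, 0 ≤ R → {g : G | dist o (g • o) ≤ R}.Finite) :
    ∀ R S : ℝ, 0 ≤ R → 0 ≤ S →
      {g : G | dist o (g • o) ≤ R + S}.ncard ≤
        {g : G | dist o (g • o) ≤ R + D}.ncard * {g : G | dist o (g • o) ≤ S + D}.ncard := by
  intro R S hR hS
  classical
  set A := {g : G | dist o (g • o) ≤ R + D} with hA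
  set B := {g : G | dist o (g • o) ≤ S + D} with hB
  have key : ∀ g : G, dist o (g • o) ≤ R + S →
      ∃ h : G, dist o (h • o) ≤ R + D ∧ dist o ((h⁻¹ * g) • o) ≤ S + D := by
    intro g hg
    obtain ⟨γ, hγ0, hγd, hγ⟩ := hgeo o (g • o)
    set d := dist o (g • o) with hd
    have hd0 : 0 ≤ d := dist_nonneg
    set t := min R d with ht
    have ht0 : 0 ≤ t := le_min hR hd0
    have htd : t ≤ d := min_le_right _ _
    obtain ⟨h, hh⟩ := hnet (γ t)
    have h1 : dist o (γ t) = t := by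
      have := hγ 0 ⟨le_refl 0, hd0⟩ t ⟨ht0, htd⟩
      rw [hγ0] at this
      rw [this, abs_of_nonpos (by linarith)]
      ring
    have h2 : dist (γ t) (g • o) = d - t := by
      have := hγ t ⟨ht0, htd⟩ d ⟨hd0, le_refl d⟩
      rw [hγd] at this
      rw [this, abs_of_nonpos (by linarith)]
      ring
    have hdtS : d - t ≤ S := by
      rcases min_cases R d with ⟨h', hle⟩ | ⟨h', hle⟩
      · rw [ht, h']; linarith
      · rw [ht, h']; linarith
    refine ⟨h, ?_, ?_⟩
    · calc dist o (h • o) ≤ dist o (γ t) + dist (γ t) (h • o) := dist_triangle _ _ _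
        _ ≤ t + D := by rw [h1]; linarith [hh]
        _ ≤ R + D := by have := min_le_left R d; linarith
    · have heq : dist o ((h⁻¹ * g) • o) = dist (h • o) (g • o) := by
        have := (hiso h).dist_eq o ((h⁻¹ * g) • o)
        simp only [smul_smul, mul_inv_cancel_left] at this
        rw [← this]
      rw [heq]
      calc dist (h • o) (g • o) ≤ dist (h • o) (γ t) + dist (γ t) (g • o) :=
            dist_triangle _ _ _
        _ ≤ D + (d - t) := by rw [h2, dist_comm]; linarith [hh]
        _ ≤ S + D := by linarith
  set f : G → G × G := fun g =>
    if hg : dist o (g • o) ≤ R + S then ((key g hg).choose, ((key g hg).choose)⁻¹ * g)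
    else (1, 1) with hf
  have hmap : ∀ g ∈ {g : G | dist o (g • o) ≤ R + S}, f g ∈ A ×ˢ B := by
    intro g hg
    have hg' : dist o (g • o) ≤ R + S := hg
    simp only [hf, dif_pos hg']
    exact ⟨(key g hg').choose_spec.1, (key g hg').choose_spec.2⟩
  have hinj : Set.InjOn f {g : G | dist o (g • o) ≤ R + S} := by
    intro a ha b hb hab
    have ha' : dist o (a • o) ≤ R + S := ha
    have hb' : dist o (b • o) ≤ R + S := hb
    simp only [hf, dif_pos ha', dif_pos hb', Prod.mk.injEq] at hab
    obtain ⟨h1, h2⟩ := hab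
    rw [h1] at h2
    exact mul_left_cancel h2
  have hABfin : (A ×ˢ B).Finite :=
    (hfin (R + D) (by linarith)).prod (hfin (S + D) (by linarith))
  calc {g : G | dist o (g • o) ≤ R + S}.ncard ≤ (A ×ˢ B).ncard :=
        Set.ncard_le_ncard_of_injOn f hmap hinj hABfin
    _ = A.ncard * B.ncard := ncard_prod_aux A B
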